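/- Let c ≥ 2 be an integer, let A and B be nonempty finite sets, and let u : A → ZMod c and v : B → ZMod c be functions such that min(d(u(i), v(j)), d(v(j), u(i))) = ⌊c/2⌋ for every i ∈ A and j ∈ B. Then: (i) there exist p, q ∈ ZMod c such that u(i) ∈ {p, p+1} for all i ∈ A and v(j) ∈ {q, q+1} for all j ∈ B; (ii) either u is constant on A or v is constant on B; and if c is even then both u and v are constant. -/
import Mathlib


/-- `dz x y` is the least nonnegative residue of `y - x` modulo `c`. -/
def dz {c : ℕ} (x y : ZMod c) : ℕ := (y - x).val

lemma key_lemma {c : ℕ} (hc : 2 ≤ c) (x y : ZMod c)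
    (h : min (dz x y) (dz y x) = c / 2) :
    y = x + ((c/2 : ℕ) : ZMod c) ∨ y = x - ((c/2 : ℕ) : ZMod c) := by
  haveI : NeZero c := ⟨by omega⟩
  have hne : y - x ≠ 0 := by
    intro h0
    have hx : x - y = 0 := by linear_combination -h0
    unfold dz at h
    rw [h0, hx] at h
    simp at h
    omega
  unfold dz at h
  have hxy : x - y = -(y - x) := by ring
  rw [hxy, ZMod.neg_val, if_neg hne] at h
  have hvlt : (y - x).val < c := ZMod.val_lt _
  have hcast : (((y - x).val : ℕ) : ZMod c) = y - x := by
    simp [ZMod.natCast_val, ZMod.cast_id]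
  have hcases : (y - x).val = c / 2 ∨ (y - x).val = c - c / 2 := by omega
  rcases hcases with h1 | h1
  · left
    have : y - x = ((c/2 : ℕ) : ZMod c) := h1 ▸ hcast.symm
    linear_combination this
  · right
    have : y - x = ((c - c/2 : ℕ) : ZMod c) := h1 ▸ hcast.symm
    rw [Nat.cast_sub (Nat.div_le_self _ _), ZMod.natCast_self] at this
    linear_combination this

theorem stmt_3 (c : ℕ) (hc : 2 ≤ c) (A B : Type) [Fintype A] [Fintype B]
    [Nonempty A] [Nonempty B] (u : A → ZMod c) (v : B → ZMod c)
    (h : ∀ (i : A) (j : B), min (dz (u i) (v j)) (dz (v j) (u i)) = c / 2) :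
    ((∃ p : ZMod c, ∀ i : A, u i = p ∨ u i = p + 1) ∧
     (∃ q : ZMod c, ∀ j : B, v j = q ∨ v j = q + 1)) ∧
    ((∀ i i' : A, u i = u i') ∨ (∀ j j' : B, v j = v j')) ∧
    (Even c → (∀ i i' : A, u i = u i') ∧ (∀ j j' : B, v j = v j')) := by
  haveI : NeZero c := ⟨by omega⟩
  haveI : Fact (1 < c) := ⟨by omega⟩
  obtain ⟨i0⟩ := ‹Nonempty A›
  obtain ⟨j0⟩ := ‹Nonempty B›
  set m : ZMod c := ((c/2 : ℕ) : ZMod c) with hm_def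
  have key : ∀ i j, v j = u i + m ∨ v j = u i - m := fun i j =>
    key_lemma hc (u i) (v j) (h i j)
  rcases Nat.even_or_odd c with hev | hod
  · -- even case
    have hsum : c / 2 + c / 2 = c := by
      rcases hev with ⟨k, hk⟩; omega
    have hm : m + m = 0 := by
      rw [hm_def, ← Nat.cast_add, hsum, ZMod.natCast_self]
    have keq : ∀ i j, v j = u i + m := by
      intro i j
      rcases key i j with h1 | h1
      · exact h1
      · rw [h1]; linear_combination -hm
    have hu : ∀ i, u i = v j0 - m := fun i => by linear_combination -(keq i j0)
    have hv : ∀ j, v j = u i0 + m := fun j => keq i0 j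
    refine ⟨⟨⟨v j0 - m, fun i => Or.inl (hu i)⟩, ⟨u i0 + m, fun j => Or.inl (hv j)⟩⟩,
      Or.inl (fun i i' => by rw [hu i, hu i']), fun _ =>
      ⟨fun i i' => by rw [hu i, hu i'], fun j j' => by rw [hv j, hv j']⟩⟩
  · -- odd case
    have hsum : c / 2 + c / 2 = c - 1 := by
      rcases hod with ⟨k, hk⟩; omega
    have hm : m + m = -1 := by
      rw [hm_def, ← Nat.cast_add, hsum, Nat.cast_sub (by omega), ZMod.natCast_self,
        Nat.cast_one]
      ring
    have h2 : (2 : ZMod c) ≠ 0 := by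
      intro h0
      have hdvd : c ∣ 2 := by
        have := (ZMod.natCast_eq_zero_iff 2 c).mp (by exact_mod_cast h0)
        exact this
      have hle := Nat.le_of_dvd (by norm_num) hdvd
      have hodd : c % 2 = 1 := Nat.odd_iff.mp hod
      omega
    have key' : ∀ i j, v j = u i + m ∨ v j = u i + m + 1 := by
      intro i j
      rcases key i j with h1 | h1
      · exact Or.inl h1
      · right; rw [h1]; linear_combination -hm
    have part1 : (∃ p : ZMod c, ∀ i : A, u i = p ∨ u i = p + 1) ∧
        (∃ q : ZMod c, ∀ j : B, v j = q ∨ v j = q + 1) := by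
      constructor
      · refine ⟨v j0 - m - 1, fun i => ?_⟩
        rcases key' i j0 with h1 | h1
        · right; linear_combination -h1
        · left; linear_combination -h1
      · refine ⟨u i0 + m, fun j => ?_⟩
        rcases key' i0 j with h1 | h1
        · exact Or.inl h1
        · exact Or.inr h1
    have part2 : (∀ i i' : A, u i = u i') ∨ (∀ j j' : B, v j = v j') := by
      by_cases hu : ∀ i i' : A, u i = u i'
      · exact Or.inl hu
      · right
        push_neg at hu
        obtain ⟨i, i', hii⟩ := hu
        intro j j'
        by_contra hvv
        -- sum trick
        have sum_eq : ∀ (a x y : ZMod c), x ≠ y → (x = a ∨ x = a + 1) →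
            (y = a ∨ y = a + 1) → x + y = a + a + 1 := by
          intro a x y hxy hx hy
          rcases hx with hx | hx <;> rcases hy with hy | hy
          · exact absurd (hx.trans hy.symm) hxy
          · rw [hx, hy]; ring
          · rw [hx, hy]; ring
          · exact absurd (hx.trans hy.symm) hxy
        have s1 : v j + v j' = (u i + m) + (u i + m) + 1 :=
          sum_eq (u i + m) (v j) (v j') hvv (key' i j) (key' i j')
        have s2 : v j + v j' = (u i' + m) + (u i' + m) + 1 :=
          sum_eq (u i' + m) (v j) (v j') hvv (key' i' j) (key' i' j')
        have hd2 : 2 * (u i - u i') = 0 := by linear_combination s2 - s1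
        have hd : u i - u i' = 1 ∨ u i - u i' = -1 := by
          rcases key' i j with h1 | h1 <;> rcases key' i' j with h1' | h1'
          · exact absurd (by linear_combination h1' - h1) hii
          · left; linear_combination h1' - h1
          · right; linear_combination h1' - h1
          · exact absurd (by linear_combination h1' - h1) hii
        rcases hd with hd | hd
        · exact h2 (by linear_combination hd2 - 2 * hd)
        · exact h2 (by linear_combination 2 * hd - hd2)
    exact ⟨part1, part2, fun hEven => absurd hEven (Nat.not_even_iff_odd.mpr hod)⟩
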